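/- Let (T(t))_{t≥0} be a C₀-semigroup on a complex Banach space X with infinitesimal generator A such that ‖T(t)x‖/t → 0 as t → ∞ for every x ∈ X. Suppose 0 is a pole of the resolvent function of A, i.e. there exist n ≥ 1 and r > 0 such that every λ with 0 < |λ| < r belongs to ρ(A) and λ ↦ λⁿ R(λ,A) is bounded in operator norm on {λ : 0 < |λ| < r}. Then T(t) is mean ergodic: lim_{t→∞} C(t)x exists for every x ∈ X. -/

import Mathlib

open Filter Topology Metric

/-- A strongly continuous one-parameter semigroup of bounded linear operators:
`T 0 = I`, `T (s+t) = T s ∘ T t` for `s,t ≥ 0`, and `t ↦ T t x` is continuous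
on `[0,∞)` for every `x`. -/
structure IsC0Semigroup {X : Type*} [NormedAddCommGroup X] [NormedSpace ℂ X]
    (T : ℝ → X →L[ℂ] X) : Prop where
  map_zero : T 0 = 1
  map_add : ∀ s t : ℝ, 0 ≤ s → 0 ≤ t → T (s + t) = T s ∘L T t
  strong_continuity : ∀ x : X, ContinuousOn (fun t : ℝ => T t x) (Set.Ici 0)

/-- `A`, with domain `D`, is the infinitesimal generator of the semigroup `T`:
`D = {x : lim_{t→0⁺} (T t x - x)/t exists}` and `A x` is that limit on `D`. -/
structure IsGenerator {X : Type*} [NormedAddCommGroup X] [NormedSpace ℂ X]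
    (T : ℝ → X →L[ℂ] X) (D : Set X) (A : X → X) : Prop where
  mem_domain_iff : ∀ x : X,
    x ∈ D ↔ ∃ y : X, Tendsto (fun t : ℝ => t⁻¹ • (T t x - x)) (𝓝[>] 0) (𝓝 y)
  tendsto_of_mem : ∀ x ∈ D,
    Tendsto (fun t : ℝ => t⁻¹ • (T t x - x)) (𝓝[>] 0) (𝓝 (A x))

section Aux
variable {X : Type*} [NormedAddCommGroup X] [NormedSpace ℂ X]
variable {T : ℝ → X →L[ℂ] X} {D : Set X} {A : X → X}

lemma creal_smul (ε : ℝ) (v : X) : (ε:ℂ) • v = ε • v := by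
  rw [← smul_one_smul ℂ ε v, Complex.real_smul, mul_one]

lemma gen_smul (hA : IsGenerator T D A) {w : X} (hw : w ∈ D) (c : ℂ) :
    c • w ∈ D ∧ A (c • w) = c • A w := by
  have h := hA.tendsto_of_mem w hw
  have h2 : Tendsto (fun t : ℝ => t⁻¹ • (T t (c • w) - c • w)) (𝓝[>] 0) (𝓝 (c • A w)) := by
    have he : ∀ t : ℝ, t⁻¹ • (T t (c • w) - c • w) = c • (t⁻¹ • (T t w - w)) := by
      intro t; rw [map_smul, ← smul_sub, smul_comm]
    rw [funext he]
    exact h.const_smul c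
  have hm : c • w ∈ D := (hA.mem_domain_iff _).2 ⟨_, h2⟩
  exact ⟨hm, tendsto_nhds_unique (hA.tendsto_of_mem _ hm) h2⟩

lemma gen_sub (hA : IsGenerator T D A) {w w' : X} (hw : w ∈ D) (hw' : w' ∈ D) :
    w - w' ∈ D ∧ A (w - w') = A w - A w' := by
  have h := (hA.tendsto_of_mem w hw).sub (hA.tendsto_of_mem w' hw')
  have h2 : Tendsto (fun t : ℝ => t⁻¹ • (T t (w - w') - (w - w'))) (𝓝[>] 0)
      (𝓝 (A w - A w')) := by
    have he : ∀ t : ℝ, t⁻¹ • (T t (w - w') - (w - w')) =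
        t⁻¹ • (T t w - w) - t⁻¹ • (T t w' - w') := by
      intro t; rw [map_sub, ← smul_sub]; congr 1; abel
    rw [funext he]; exact h
  have hm : w - w' ∈ D := (hA.mem_domain_iff _).2 ⟨_, h2⟩
  exact ⟨hm, tendsto_nhds_unique (hA.tendsto_of_mem _ hm) h2⟩

lemma hasDerivWithinAt_semigroup (hT : IsC0Semigroup T) (hA : IsGenerator T D A)
    {y : X} (hy : y ∈ D) {t : ℝ} (ht : 0 ≤ t) :
    HasDerivWithinAt (fun s : ℝ => T s y) (T t (A y)) (Set.Ioi t) t := by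
  rw [hasDerivWithinAt_iff_tendsto_slope]
  have hsub : Tendsto (fun u : ℝ => u - t) (𝓝[Set.Ioi t \ {t}] t) (𝓝[>] (0:ℝ)) := by
    apply tendsto_nhdsWithin_of_tendsto_nhds_of_eventually_within
    · have : Tendsto (fun u : ℝ => u - t) (𝓝 t) (𝓝 (t - t)) :=
        ((continuous_id.sub continuous_const).tendsto t)
      simpa using this.mono_left nhdsWithin_le_nhds
    · filter_upwards [self_mem_nhdsWithin] with u hu
      exact sub_pos.2 (Set.mem_Ioi.1 hu.1)
  have h1 : Tendsto (fun h : ℝ => T t (h⁻¹ • (T h y - y))) (𝓝[>] (0:ℝ)) (𝓝 (T t (A y))) :=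
    ((T t).continuous.tendsto _).comp (hA.tendsto_of_mem y hy)
  refine (h1.comp hsub).congr' ?_
  filter_upwards [self_mem_nhdsWithin] with u hu
  have hut : t < u := hu.1
  have : T u y - T t y = T t (T (u - t) y - y) := by
    have := hT.map_add t (u - t) ht (by linarith)
    rw [map_sub]
    rw [show t + (u - t) = u by ring] at this
    rw [this]; rfl
  simp only [Function.comp_apply, slope_def_module]
  rw [this, (T t).map_smul_of_tower]



-- continuity on Icc
example {T : ℝ → X →L[ℂ] X} (hc : ∀ x : X, ContinuousOn (fun t : ℝ => T t x) (Set.Ici 0))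
    (x : X) {t : ℝ} (ht : 0 ≤ t) : ContinuousOn (fun s : ℝ => T s x) (Set.Icc 0 t) :=
  (hc x).mono Set.Icc_subset_Ici_self

-- integrability
example {T : ℝ → X →L[ℂ] X} (hc : ∀ x : X, ContinuousOn (fun t : ℝ => T t x) (Set.Ici 0))
    (x : X) {t : ℝ} (ht : 0 ≤ t) :
    IntervalIntegrable (fun s : ℝ => T s x) MeasureTheory.volume 0 t := by
  apply ContinuousOn.intervalIntegrable
  rw [Set.uIcc_of_le ht]
  exact (hc x).mono Set.Icc_subset_Ici_self

-- uniform bound on compacts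
lemma bound_on_Icc [CompleteSpace X] {T : ℝ → X →L[ℂ] X}
    (hc : ∀ x : X, ContinuousOn (fun t : ℝ => T t x) (Set.Ici 0)) (b : ℝ) :
    ∃ M : ℝ, 0 ≤ M ∧ ∀ s ∈ Set.Icc (0:ℝ) b, ‖T s‖ ≤ M := by
  rcases le_or_gt b 0 with hb | hb
  · refine ⟨‖T 0‖ , norm_nonneg _, fun s hs => ?_⟩
    have : s = 0 := le_antisymm (hs.2.trans hb) hs.1
    rw [this]
  · have hpt : ∀ x : X, ∃ C, ∀ i : Set.Icc (0:ℝ) b, ‖T i x‖ ≤ C := by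
      intro x
      obtain ⟨C, hC⟩ := (isCompact_Icc (a := (0:ℝ)) (b := b)).exists_bound_of_continuousOn
        ((hc x).mono Set.Icc_subset_Ici_self)
      exact ⟨C, fun i => hC i i.2⟩
    obtain ⟨M, hM⟩ := banach_steinhaus (g := fun s : Set.Icc (0:ℝ) b => T s) hpt
    exact ⟨max M 0, le_max_right _ _, fun s hs => le_trans (hM ⟨s, hs⟩) (le_max_left _ _)⟩

-- averaging
lemma avg_tendsto [CompleteSpace X] {T : ℝ → X →L[ℂ] X} (hT0 : T 0 = 1)
    (hc : ∀ x : X, ContinuousOn (fun t : ℝ => T t x) (Set.Ici 0)) (z : X) :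
    Tendsto (fun t : ℝ => t⁻¹ • ∫ s in (0:ℝ)..t, T s z) (𝓝[>] (0:ℝ)) (𝓝 z) := by
  rw [Metric.tendsto_nhds]
  intro δ hδ
  have hcz : ContinuousWithinAt (fun s : ℝ => T s z) (Set.Ici 0) 0 := (hc z) 0 Set.self_mem_Ici
  rw [ContinuousWithinAt, Metric.tendsto_nhdsWithin_nhds] at hcz
  obtain ⟨η, hη, hball⟩ := hcz (δ/2) (by linarith)
  filter_upwards [Ioo_mem_nhdsGT_of_mem (Set.mem_Ico.2 ⟨le_refl (0:ℝ), hη⟩)] with t ht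
  have ht0 : 0 < t := ht.1
  have hbound : ∀ s ∈ Set.uIoc (0:ℝ) t, ‖T s z - T 0 z‖ ≤ δ/2 := by
    intro s hs
    rw [Set.uIoc_of_le ht0.le] at hs
    have : dist (T s z) (T 0 z) < δ/2 := hball (Set.mem_Ici.2 hs.1.le)
      (by rw [Real.dist_eq, sub_zero, abs_of_nonneg hs.1.le]; exact lt_of_le_of_lt hs.2 ht.2)
    rw [dist_eq_norm] at this; exact this.le
  have hint : IntervalIntegrable (fun s : ℝ => T s z) MeasureTheory.volume 0 t := by
    apply ContinuousOn.intervalIntegrable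
    rw [Set.uIcc_of_le ht0.le]
    exact (hc z).mono Set.Icc_subset_Ici_self
  have heq : t⁻¹ • (∫ s in (0:ℝ)..t, T s z) - z
      = t⁻¹ • ∫ s in (0:ℝ)..t, (T s z - T 0 z) := by
    rw [intervalIntegral.integral_sub hint intervalIntegrable_const,
      intervalIntegral.integral_const, smul_sub, sub_zero, smul_smul,
      inv_mul_cancel₀ ht0.ne', one_smul, hT0]
    rfl
  have hn : ‖∫ s in (0:ℝ)..t, (T s z - T 0 z)‖ ≤ δ/2 * |t - 0| :=
    intervalIntegral.norm_integral_le_of_norm_le_const hbound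
  rw [dist_eq_norm, heq]
  rw [norm_smul, Real.norm_eq_abs, abs_of_pos (inv_pos.2 ht0)]
  have : t⁻¹ * ‖∫ s in (0:ℝ)..t, (T s z - T 0 z)‖ ≤ t⁻¹ * (δ/2 * t) := by
    apply mul_le_mul_of_nonneg_left _ (inv_pos.2 ht0).le
    simpa [abs_of_pos ht0] using hn
  calc t⁻¹ * ‖∫ s in (0:ℝ)..t, (T s z - T 0 z)‖ ≤ t⁻¹ * (δ/2 * t) := this
    _ = δ/2 := by field_simp
    _ < δ := by linarith

lemma intInt (hT : IsC0Semigroup T) (x : X) {t : ℝ} (ht : 0 ≤ t) :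
    IntervalIntegrable (fun s : ℝ => T s x) MeasureTheory.volume 0 t := by
  apply ContinuousOn.intervalIntegrable
  rw [Set.uIcc_of_le ht]
  exact (hT.strong_continuity x).mono Set.Icc_subset_Ici_self

lemma integral_TA [CompleteSpace X] (hT : IsC0Semigroup T) (hA : IsGenerator T D A)
    {y : X} (hy : y ∈ D) {t : ℝ} (ht : 0 ≤ t) :
    ∫ s in (0:ℝ)..t, T s (A y) = T t y - y := by
  have h := intervalIntegral.integral_eq_sub_of_hasDeriv_right_of_le ht
    ((hT.strong_continuity y).mono Set.Icc_subset_Ici_self)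
    (fun u hu => hasDerivWithinAt_semigroup hT hA hy hu.1.le)
    (intInt hT (A y) ht)
  rw [h, hT.map_zero]; rfl

lemma const_of_ker [CompleteSpace X] (hT : IsC0Semigroup T) (hA : IsGenerator T D A)
    {w : X} (hw : w ∈ D) (hw0 : A w = 0) {t : ℝ} (ht : 0 ≤ t) : T t w = w := by
  have h := integral_TA hT hA hw ht
  rw [hw0] at h
  simp only [map_zero, intervalIntegral.integral_zero] at h
  exact sub_eq_zero.1 h.symm

lemma closed_graph [CompleteSpace X] (hT : IsC0Semigroup T) (hA : IsGenerator T D A)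
    {f : ℝ → X} {x z : X} (hfD : ∀ᶠ ε in 𝓝[>] (0:ℝ), f ε ∈ D)
    (hfx : Tendsto f (𝓝[>] (0:ℝ)) (𝓝 x))
    (hfz : Tendsto (fun ε => A (f ε)) (𝓝[>] (0:ℝ)) (𝓝 z)) :
    x ∈ D ∧ A x = z := by
  have key : ∀ t : ℝ, 0 < t → T t x - x = ∫ s in (0:ℝ)..t, T s z := by
    intro t ht
    obtain ⟨Mt, hMt0, hMt⟩ := bound_on_Icc (T := T) hT.strong_continuity t
    have h1 : Tendsto (fun ε => T t (f ε) - f ε) (𝓝[>] (0:ℝ)) (𝓝 (T t x - x)) :=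
      (((T t).continuous.tendsto x).comp hfx).sub hfx
    have h2 : Tendsto (fun ε => ∫ s in (0:ℝ)..t, T s (A (f ε)))
        (𝓝[>] (0:ℝ)) (𝓝 (∫ s in (0:ℝ)..t, T s z)) := by
      rw [tendsto_iff_norm_sub_tendsto_zero]
      have hz0 : Tendsto (fun ε => Mt * t * ‖A (f ε) - z‖) (𝓝[>] (0:ℝ)) (𝓝 0) := by
        have h3 := (tendsto_iff_norm_sub_tendsto_zero.1 hfz).const_mul (Mt * t)
        simpa using h3
      apply squeeze_zero' (Eventually.of_forall fun ε => norm_nonneg _) _ hz0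
      filter_upwards with ε
      have heq : (∫ s in (0:ℝ)..t, T s (A (f ε))) - ∫ s in (0:ℝ)..t, T s z
          = ∫ s in (0:ℝ)..t, T s (A (f ε) - z) := by
        rw [← intervalIntegral.integral_sub (intInt hT _ ht.le) (intInt hT _ ht.le)]
        congr 1; funext s; rw [map_sub]
      rw [heq]
      have hb : ∀ s ∈ Set.uIoc (0:ℝ) t, ‖T s (A (f ε) - z)‖ ≤ Mt * ‖A (f ε) - z‖ := by
        intro s hs
        rw [Set.uIoc_of_le ht.le] at hs
        exact le_trans ((T s).le_opNorm _)
          (mul_le_mul_of_nonneg_right (hMt s ⟨hs.1.le, hs.2⟩) (norm_nonneg _))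
      calc ‖∫ s in (0:ℝ)..t, T s (A (f ε) - z)‖ ≤ Mt * ‖A (f ε) - z‖ * |t - 0| :=
            intervalIntegral.norm_integral_le_of_norm_le_const hb
        _ = Mt * t * ‖A (f ε) - z‖ := by rw [sub_zero, abs_of_pos ht]; ring
    have heqv : ∀ᶠ ε in 𝓝[>] (0:ℝ),
        T t (f ε) - f ε = ∫ s in (0:ℝ)..t, T s (A (f ε)) := by
      filter_upwards [hfD] with ε hε
      rw [integral_TA hT hA hε ht.le]
    exact tendsto_nhds_unique (h1.congr' heqv) h2
  have havg : Tendsto (fun t : ℝ => t⁻¹ • (T t x - x)) (𝓝[>] (0:ℝ)) (𝓝 z) := by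
    apply (avg_tendsto (T := T) hT.map_zero hT.strong_continuity z).congr'
    filter_upwards [self_mem_nhdsWithin] with t ht
    rw [key t ht]
  have hxD : x ∈ D := (hA.mem_domain_iff x).2 ⟨z, havg⟩
  exact ⟨hxD, tendsto_nhds_unique (hA.tendsto_of_mem x hxD) havg⟩

lemma linear_growth (hT : IsC0Semigroup T)
    (hg : ∀ x : X, Tendsto (fun t : ℝ => ‖T t x‖ / t) atTop (𝓝 0)) (x : X)
    {δ : ℝ} (hδ : 0 < δ) : ∃ C : ℝ, 0 ≤ C ∧ ∀ s : ℝ, 0 ≤ s → ‖T s x‖ ≤ δ * s + C := by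
  have h : ∀ᶠ s in atTop, ‖T s x‖ / s < δ := (hg x).eventually_lt_const hδ
  obtain ⟨s₀, hs₀⟩ := eventually_atTop.1 h
  set s₁ := max s₀ 1 with hs₁
  obtain ⟨C₀, hC₀⟩ := (isCompact_Icc (a := (0:ℝ)) (b := s₁)).exists_bound_of_continuousOn
    ((hT.strong_continuity x).mono Set.Icc_subset_Ici_self)
  refine ⟨max C₀ 0, le_max_right _ _, fun s hs => ?_⟩
  rcases le_or_gt s s₁ with hcase | hcase
  · have := hC₀ s ⟨hs, hcase⟩
    have hδs : 0 ≤ δ * s := mul_nonneg hδ.le hs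
    calc ‖T s x‖ ≤ C₀ := this
      _ ≤ max C₀ 0 := le_max_left _ _
      _ ≤ δ * s + max C₀ 0 := by linarith
  · have hspos : (0:ℝ) < s := lt_of_lt_of_le (lt_of_lt_of_le one_pos (le_max_right s₀ 1)) hcase.le
    have h1 : ‖T s x‖ / s < δ := hs₀ s (le_trans (le_max_left s₀ 1) hcase.le)
    have h2 : ‖T s x‖ < δ * s := by
      rwa [div_lt_iff₀ hspos] at h1
    have : (0:ℝ) ≤ max C₀ 0 := le_max_right _ _
    linarith

lemma exp_identity [CompleteSpace X] (hT : IsC0Semigroup T) (hA : IsGenerator T D A)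
    {y x : X} (hy : y ∈ D) {ε : ℝ} (hε : 0 < ε) (hxy : A y = ε • y - x)
    {t : ℝ} (ht : 0 ≤ t) :
    y = Real.exp (-(ε*t)) • T t y + ∫ s in (0:ℝ)..t, Real.exp (-(ε*s)) • T s x := by
  have hderiv : ∀ u ∈ Set.Ioo (0:ℝ) t, HasDerivWithinAt
      (fun s : ℝ => Real.exp (-(ε*s)) • T s y)
      (-(Real.exp (-(ε*u)) • T u x)) (Set.Ioi u) u := by
    intro u hu
    have hexp : HasDerivAt (fun s : ℝ => Real.exp (-(ε*s))) (Real.exp (-(ε*u)) * (-ε)) u := by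
      have h0 : HasDerivAt (fun s : ℝ => -(ε*s)) (-ε) u := by
        exact (by simpa using ((hasDerivAt_id u).const_mul ε).neg : HasDerivAt (-fun y : ℝ => ε * y) (-ε) u)
      exact h0.exp
    have hf := hasDerivWithinAt_semigroup hT hA hy hu.1.le
    have hs := hexp.hasDerivWithinAt.smul hf
    convert hs using 1
    · rfl
    rw [hxy, map_sub, (T u).map_smul_of_tower, smul_sub, smul_smul, mul_neg, neg_smul]
    abel
  have hcont : ContinuousOn (fun s : ℝ => Real.exp (-(ε*s)) • T s y) (Set.Icc 0 t) :=
    ((Real.continuous_exp.comp (by continuity)).continuousOn).smul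
      ((hT.strong_continuity y).mono Set.Icc_subset_Ici_self)
  have hint : IntervalIntegrable (fun s : ℝ => -(Real.exp (-(ε*s)) • T s x))
      MeasureTheory.volume 0 t := by
    apply ContinuousOn.intervalIntegrable
    rw [Set.uIcc_of_le ht]
    exact (((Real.continuous_exp.comp (by continuity)).continuousOn).smul
      ((hT.strong_continuity x).mono Set.Icc_subset_Ici_self)).neg
  have h := intervalIntegral.integral_eq_sub_of_hasDeriv_right_of_le ht hcont hderiv hint
  rw [intervalIntegral.integral_neg] at h
  have h2 : -(∫ s in (0:ℝ)..t, Real.exp (-(ε*s)) • T s x)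
      = Real.exp (-(ε*t)) • T t y - y := by
    rw [h]
    congr 1
    rw [mul_zero, neg_zero, Real.exp_zero, one_smul, hT.map_zero]
    rfl
  have h3 : (∫ s in (0:ℝ)..t, Real.exp (-(ε*s)) • T s x)
      = y - Real.exp (-(ε*t)) • T t y := by
    have h4 := neg_eq_iff_eq_neg.1 h2
    rw [h4, neg_sub]
  rw [h3]
  abel

lemma exp_integral_bound {ε δ C t : ℝ} (hε : 0 < ε) (hδ : 0 ≤ δ) (hC : 0 ≤ C) (ht : 0 ≤ t) :
    ∫ s in (0:ℝ)..t, Real.exp (-(ε*s)) * (δ*s + C) ≤ δ/ε^2 + C/ε := by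
  set F : ℝ → ℝ := fun s => -(Real.exp (-(ε*s)) * (δ*s/ε + (δ/ε^2 + C/ε))) with hF
  have hderiv : ∀ s ∈ Set.uIcc (0:ℝ) t, HasDerivAt F (Real.exp (-(ε*s)) * (δ*s + C)) s := by
    intro s _
    have h1 : HasDerivAt (fun s : ℝ => Real.exp (-(ε*s))) (Real.exp (-(ε*s)) * (-ε)) s := by
      have h0 : HasDerivAt (fun s : ℝ => -(ε*s)) (-ε) s := by
        exact (by simpa using ((hasDerivAt_id s).const_mul ε).neg : HasDerivAt (-fun y : ℝ => ε * y) (-ε) s)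
      exact h0.exp
    have h2 : HasDerivAt (fun s : ℝ => δ*s/ε + (δ/ε^2 + C/ε)) (δ/ε) s := by
      have := (((hasDerivAt_id s).const_mul δ).div_const ε).add_const (δ/ε^2 + C/ε)
      simpa [mul_comm] using this
    have h3 := (h1.mul h2).neg
    convert h3 using 1
    · rfl
    · rfl
    · rfl
    have hne : ε ≠ 0 := hε.ne'
    field_simp
    ring
  have hce : Continuous fun s : ℝ => Real.exp (-(ε*s)) :=
    Real.continuous_exp.comp ((continuous_const.mul continuous_id).neg)
  have hi : IntervalIntegrable (fun s : ℝ => Real.exp (-(ε*s)) * (δ*s + C))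
      MeasureTheory.volume 0 t :=
    (hce.mul ((continuous_const.mul continuous_id).add continuous_const)).intervalIntegrable _ _
  rw [intervalIntegral.integral_eq_sub_of_hasDerivAt hderiv hi]
  have hFt : F t ≤ 0 := by
    simp only [hF, neg_nonpos]
    positivity
  have hF0 : F 0 = -(δ/ε^2 + C/ε) := by
    simp [hF]
  calc F t - F 0 ≤ 0 - F 0 := sub_le_sub_right hFt (F 0)
    _ = δ/ε^2 + C/ε := by rw [hF0]; ring

lemma abel_bound [CompleteSpace X] (hT : IsC0Semigroup T) (hA : IsGenerator T D A)
    (hg : ∀ x : X, Tendsto (fun t : ℝ => ‖T t x‖ / t) atTop (𝓝 0))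
    {y x : X} (hy : y ∈ D) {ε : ℝ} (hε : 0 < ε) (hxy : A y = ε • y - x)
    {δ C : ℝ} (hδ : 0 < δ) (hC : 0 ≤ C) (hbound : ∀ s : ℝ, 0 ≤ s → ‖T s x‖ ≤ δ * s + C) :
    ‖y‖ ≤ δ/ε^2 + C/ε := by
  have hmain : ∀ t : ℝ, 0 ≤ t →
      ‖y‖ ≤ Real.exp (-(ε*t)) * ‖T t y‖ + (δ/ε^2 + C/ε) := by
    intro t ht
    have hid := exp_identity hT hA hy hε hxy ht
    have hce : Continuous fun s : ℝ => Real.exp (-(ε*s)) :=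
      Real.continuous_exp.comp ((continuous_const.mul continuous_id).neg)
    have hn1 : ‖y‖ ≤ ‖Real.exp (-(ε*t)) • T t y‖
        + ‖∫ s in (0:ℝ)..t, Real.exp (-(ε*s)) • T s x‖ := by
      conv_lhs => rw [hid]
      exact norm_add_le _ _
    have hn2 : ‖Real.exp (-(ε*t)) • T t y‖ = Real.exp (-(ε*t)) * ‖T t y‖ := by
      rw [norm_smul, Real.norm_eq_abs, abs_of_pos (Real.exp_pos _)]
    have hi1 : IntervalIntegrable (fun s : ℝ => Real.exp (-(ε*s)) * ‖T s x‖)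
        MeasureTheory.volume 0 t := by
      apply ContinuousOn.intervalIntegrable
      rw [Set.uIcc_of_le ht]
      exact (hce.continuousOn).mul
        (ContinuousOn.norm ((hT.strong_continuity x).mono Set.Icc_subset_Ici_self))
    have hi2 : IntervalIntegrable (fun s : ℝ => Real.exp (-(ε*s)) * (δ*s + C))
        MeasureTheory.volume 0 t :=
      (hce.mul ((continuous_const.mul continuous_id).add continuous_const)).intervalIntegrable _ _
    have hn3 : ‖∫ s in (0:ℝ)..t, Real.exp (-(ε*s)) • T s x‖
        ≤ ∫ s in (0:ℝ)..t, Real.exp (-(ε*s)) * ‖T s x‖ := by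
      have := intervalIntegral.norm_integral_le_integral_norm
        (f := fun s : ℝ => Real.exp (-(ε*s)) • T s x) (μ := MeasureTheory.volume) ht
      apply le_trans this
      apply le_of_eq
      congr 1; funext s
      rw [norm_smul, Real.norm_eq_abs, abs_of_pos (Real.exp_pos _)]
    have hn4 : (∫ s in (0:ℝ)..t, Real.exp (-(ε*s)) * ‖T s x‖)
        ≤ ∫ s in (0:ℝ)..t, Real.exp (-(ε*s)) * (δ*s + C) := by
      apply intervalIntegral.integral_mono_on ht hi1 hi2
      intro s hs
      exact mul_le_mul_of_nonneg_left (hbound s hs.1) (Real.exp_pos _).le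
    have hn5 := exp_integral_bound hε hδ.le hC ht
    linarith
  obtain ⟨Cy, hCy0, hCy⟩ := linear_growth hT hg y one_pos
  have hlim : Tendsto (fun t : ℝ => Real.exp (-(ε*t)) * ‖T t y‖) atTop (𝓝 0) := by
    have houter : Tendsto (fun u : ℝ => Real.exp (-u) * (u/ε + Cy)) atTop (𝓝 0) := by
      have hb1 : Tendsto (fun u : ℝ => u * Real.exp (-u) / ε) atTop (𝓝 0) := by
        have := (Real.tendsto_pow_mul_exp_neg_atTop_nhds_zero 1).div_const ε
        simpa using this
      have hb2 : Tendsto (fun u : ℝ => Real.exp (-u) * Cy) atTop (𝓝 0) := by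
        have := (Real.tendsto_exp_neg_atTop_nhds_zero).mul_const Cy
        simpa using this
      have := hb1.add hb2
      simp only [add_zero] at this
      apply this.congr
      intro u; field_simp
    have hinner : Tendsto (fun t : ℝ => ε * t) atTop atTop :=
      Tendsto.const_mul_atTop hε tendsto_id
    have hcomp := houter.comp hinner
    have hcomp2 : Tendsto (fun t : ℝ => Real.exp (-(ε*t)) * (t + Cy)) atTop (𝓝 0) := by
      apply hcomp.congr
      intro t
      simp only [Function.comp_apply]
      have hne : ε ≠ 0 := hε.ne'
      have h9 : ε*t/ε + Cy = t + Cy := by field_simp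
      rw [h9]
    apply squeeze_zero' ?_ ?_ hcomp2
    · filter_upwards with t; positivity
    · filter_upwards [eventually_ge_atTop (0:ℝ)] with t ht
      have := hCy t ht
      have h2 : ‖T t y‖ ≤ t + Cy := by linarith [this]
      exact mul_le_mul_of_nonneg_left h2 (Real.exp_pos _).le
  have htend : Tendsto (fun t : ℝ => Real.exp (-(ε*t)) * ‖T t y‖ + (δ/ε^2 + C/ε))
      atTop (𝓝 (δ/ε^2 + C/ε)) := by
    have := hlim.add (tendsto_const_nhds (x := δ/ε^2 + C/ε) (f := atTop))
    simpa using this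
  apply ge_of_tendsto htend
  filter_upwards [eventually_ge_atTop (0:ℝ)] with t ht
  exact hmain t ht

end Aux





/-- The Cesàro average `C(t)x = t⁻¹ ∫₀ᵗ T(s)x ds`. -/
noncomputable def cesaro {X : Type*} [NormedAddCommGroup X] [NormedSpace ℂ X]
    (T : ℝ → X →L[ℂ] X) (t : ℝ) (x : X) : X :=
  t⁻¹ • ∫ s in (0:ℝ)..t, T s x

set_option maxHeartbeats 2000000 in
/-- If `‖T(t)x‖/t → 0` for every `x` and `0` is a pole of the resolvent of `A`
(i.e. some punctured disk around `0` lies in `ρ(A)`, with `λⁿ R(λ,A)` bounded in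
operator norm there for some `n ≥ 1`), then `T(t)` is mean ergodic. -/
theorem meanErgodic_of_pole_of_resolvent
    {X : Type*} [NormedAddCommGroup X] [NormedSpace ℂ X] [CompleteSpace X]
    (T : ℝ → X →L[ℂ] X) (D : Set X) (A : X → X)
    (hT : IsC0Semigroup T) (hA : IsGenerator T D A)
    (hgrowth : ∀ x : X, Tendsto (fun t : ℝ => ‖T t x‖ / t) atTop (𝓝 0))
    (hpole : ∃ n : ℕ, 1 ≤ n ∧ ∃ r : ℝ, 0 < r ∧ ∃ R : ℂ → X →L[ℂ] X,
      (∀ μ : ℂ, μ ≠ 0 → ‖μ‖ < r →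
        (∀ v : X, R μ v ∈ D ∧ μ • R μ v - A (R μ v) = v) ∧
        ∀ v ∈ D, R μ (μ • v - A v) = v) ∧
      ∃ M : ℝ, ∀ μ : ℂ, μ ≠ 0 → ‖μ‖ < r → ‖μ‖ ^ n * ‖R μ‖ ≤ M) :
    ∀ x : X, ∃ y : X, Tendsto (fun t : ℝ => cesaro T t x) atTop (𝓝 y) := by
  obtain ⟨n, hn, r, hr, R, hres, M, hM⟩ := hpole
  set s : Set ℂ := ball (0:ℂ) r \ {0} with hs
  have hs_mem : ∀ {μ : ℂ}, μ ∈ s → μ ≠ 0 ∧ ‖μ‖ < r := by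
    intro μ hμ
    refine ⟨fun h => hμ.2 (by simp [h]), mem_ball_zero_iff.1 hμ.1⟩
  -- basic facts about the resolvent
  have hAR : ∀ {μ : ℂ}, μ ≠ 0 → ‖μ‖ < r → ∀ v : X,
      A (R μ v) = μ • R μ v - v := by
    intro μ h1 h2 v
    have h := ((hres μ h1 h2).1 v).2
    have h3 : v + A (R μ v) = μ • R μ v := (sub_eq_iff_eq_add.1 h).symm
    exact eq_sub_of_add_eq' h3
  -- the resolvent identity
  have rid : ∀ {μ ν : ℂ}, μ ≠ 0 → ‖μ‖ < r → ν ≠ 0 → ‖ν‖ < r →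
      R μ - R ν = (ν - μ) • (R μ ∘L R ν) := by
    intro μ ν hμ1 hμ2 hν1 hν2
    ext v
    have hw : R ν v ∈ D := ((hres ν hν1 hν2).1 v).1
    have hAw : A (R ν v) = ν • R ν v - v := hAR hν1 hν2 v
    have h3 : μ • (R ν v) - A (R ν v) = (μ - ν) • R ν v + v := by
      rw [hAw, sub_smul]; abel
    have h4 : R μ ((μ - ν) • R ν v + v) = R ν v := by
      rw [← h3]; exact (hres μ hμ1 hμ2).2 (R ν v) hw
    rw [map_add, map_smul] at h4
    simp only [ContinuousLinearMap.sub_apply, ContinuousLinearMap.smul_apply,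
      ContinuousLinearMap.comp_apply]
    have h5 : (μ - ν) • R μ (R ν v) = R ν v - R μ v := eq_sub_of_add_eq h4
    have h6 : (ν - μ) • R μ (R ν v) = R μ v - R ν v := by
      have h7 : ν - μ = -(μ - ν) := by ring
      rw [h7, neg_smul, h5, neg_sub]
    exact h6.symm
  -- continuity of the resolvent on s
  have hcont : ∀ μ₀ ∈ s, ContinuousWithinAt R s μ₀ := by
    intro μ₀ hμ₀
    obtain ⟨h01, h02⟩ := hs_mem hμ₀
    have hκpos : (0:ℝ) < (2 * (‖R μ₀‖ + 1))⁻¹ := by positivity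
    have hev : ∀ᶠ ν in 𝓝[s] μ₀,
        ‖R ν - R μ₀‖ ≤ (‖R μ₀‖ * (2 * ‖R μ₀‖)) * ‖ν - μ₀‖ := by
      filter_upwards [mem_nhdsWithin_of_mem_nhds (Metric.ball_mem_nhds μ₀ hκpos),
        self_mem_nhdsWithin] with ν hd hνs
      obtain ⟨hν1, hν2⟩ := hs_mem hνs
      have hid := rid hν1 hν2 h01 h02
      have hb1 : ‖R ν - R μ₀‖ ≤ ‖ν - μ₀‖ * (‖R ν‖ * ‖R μ₀‖) := by
        calc ‖R ν - R μ₀‖ = ‖(μ₀ - ν) • (R ν ∘L R μ₀)‖ := by rw [hid]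
          _ ≤ ‖μ₀ - ν‖ * ‖R ν ∘L R μ₀‖ := ContinuousLinearMap.opNorm_smul_le _ _
          _ ≤ ‖μ₀ - ν‖ * (‖R ν‖ * ‖R μ₀‖) :=
              mul_le_mul_of_nonneg_left ((R ν).opNorm_comp_le (R μ₀)) (norm_nonneg _)
          _ = ‖ν - μ₀‖ * (‖R ν‖ * ‖R μ₀‖) := by rw [norm_sub_rev]
      have hdist : ‖ν - μ₀‖ < (2 * (‖R μ₀‖ + 1))⁻¹ := by
        rw [mem_ball, dist_eq_norm] at hd; exact hd
      have hhalf : ‖ν - μ₀‖ * ‖R μ₀‖ ≤ 1/2 := by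
        have h1 : ‖ν - μ₀‖ * (‖R μ₀‖ + 1) ≤ (2 * (‖R μ₀‖ + 1))⁻¹ * (‖R μ₀‖ + 1) := by
          apply mul_le_mul_of_nonneg_right hdist.le (by positivity)
        have h2 : (2 * (‖R μ₀‖ + 1))⁻¹ * (‖R μ₀‖ + 1) = 1/2 := by
          field_simp
        nlinarith [norm_nonneg (R μ₀), norm_nonneg (ν - μ₀)]
      have hRν : ‖R ν‖ ≤ 2 * ‖R μ₀‖ := by
        have h6 : ‖R ν‖ ≤ ‖R μ₀‖ + ‖R ν - R μ₀‖ := by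
          calc ‖R ν‖ = ‖R μ₀ + (R ν - R μ₀)‖ := by rw [add_sub_cancel]
            _ ≤ ‖R μ₀‖ + ‖R ν - R μ₀‖ := norm_add_le _ _
        nlinarith [norm_nonneg (R ν), norm_nonneg (R μ₀), norm_nonneg (ν - μ₀)]
      calc ‖R ν - R μ₀‖ ≤ ‖ν - μ₀‖ * (‖R ν‖ * ‖R μ₀‖) := hb1
        _ ≤ ‖ν - μ₀‖ * ((2 * ‖R μ₀‖) * ‖R μ₀‖) := by
            apply mul_le_mul_of_nonneg_left _ (norm_nonneg _)
            exact mul_le_mul_of_nonneg_right hRν (norm_nonneg _)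
        _ = (‖R μ₀‖ * (2 * ‖R μ₀‖)) * ‖ν - μ₀‖ := by ring
    rw [ContinuousWithinAt, tendsto_iff_norm_sub_tendsto_zero]
    apply squeeze_zero' (Eventually.of_forall fun ν => norm_nonneg _) hev
    have hc : Tendsto (fun ν : ℂ => (‖R μ₀‖ * (2 * ‖R μ₀‖)) * ‖ν - μ₀‖) (𝓝 μ₀)
        (𝓝 ((‖R μ₀‖ * (2 * ‖R μ₀‖)) * ‖μ₀ - μ₀‖)) :=
      (continuous_const.mul (continuous_norm.comp (continuous_id.sub continuous_const))).tendsto μ₀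
    simp only [sub_self, norm_zero, mul_zero] at hc
    exact hc.mono_left nhdsWithin_le_nhds
  -- differentiability of the resolvent on s
  have hdiff : DifferentiableOn ℂ R s := by
    intro μ₀ hμ₀
    obtain ⟨h01, h02⟩ := hs_mem hμ₀
    have hder : HasDerivWithinAt R (-(R μ₀ ∘L R μ₀)) s μ₀ := by
      rw [hasDerivWithinAt_iff_tendsto_slope]
      have hc2 : Tendsto (fun ν : ℂ => -(ContinuousLinearMap.compL ℂ X X X (R μ₀) (R ν)))
          (𝓝[s \ {μ₀}] μ₀) (𝓝 (-(ContinuousLinearMap.compL ℂ X X X (R μ₀) (R μ₀)))) := by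
        have hcomp : Continuous fun B : X →L[ℂ] X =>
            -(ContinuousLinearMap.compL ℂ X X X (R μ₀) B) :=
          ((ContinuousLinearMap.compL ℂ X X X (R μ₀)).continuous).neg
        exact (hcomp.tendsto (R μ₀)).comp
          (((hcont μ₀ hμ₀)).tendsto.mono_left (nhdsWithin_mono μ₀ Set.diff_subset))
      apply hc2.congr'
      filter_upwards [self_mem_nhdsWithin] with ν hν
      obtain ⟨hνs, hνne⟩ := hν
      obtain ⟨hν1, hν2⟩ := hs_mem hνs
      have hνμ : ν ≠ μ₀ := by simpa using hνne
      have hid := rid h01 h02 hν1 hν2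
      have hsub : R ν - R μ₀ = -((ν - μ₀) • (R μ₀ ∘L R ν)) := by rw [← hid]; abel
      rw [slope_def_module, hsub, smul_neg, smul_smul,
        inv_mul_cancel₀ (sub_ne_zero.2 hνμ), one_smul]
      rfl
    exact hder.differentiableWithinAt
  -- Abelian estimate : ε² R(ε) v → 0 along real ε → 0⁺
  have habel : ∀ v : X, Tendsto (fun ε : ℝ => ε^2 • R (ε:ℂ) v) (𝓝[>] (0:ℝ)) (𝓝 0) := by
    intro v
    rw [Metric.tendsto_nhds]
    intro δ hδ
    obtain ⟨C, hC0, hCb⟩ := linear_growth hT hgrowth v (half_pos hδ)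
    have hsmall : (0:ℝ) < min r (δ/2 / (C+1)) := by
      apply lt_min hr; positivity
    filter_upwards [Ioo_mem_nhdsGT_of_mem (Set.mem_Ico.2 ⟨le_refl (0:ℝ), hsmall⟩)] with ε hε
    obtain ⟨hε0, hεlt⟩ := hε
    have hεr : ε < r := lt_of_lt_of_le hεlt (min_le_left _ _)
    have hεδ : ε < δ/2 / (C+1) := lt_of_lt_of_le hεlt (min_le_right _ _)
    have h1 : (ε:ℂ) ≠ 0 := Complex.ofReal_ne_zero.2 hε0.ne'
    have h2 : ‖(ε:ℂ)‖ < r := by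
      rw [Complex.norm_real, Real.norm_eq_abs, abs_of_pos hε0]; exact hεr
    have hyD : R (ε:ℂ) v ∈ D := ((hres _ h1 h2).1 v).1
    have hxy : A (R (ε:ℂ) v) = ε • R (ε:ℂ) v - v := by
      rw [hAR h1 h2 v, creal_smul]
    have hb := abel_bound hT hA hgrowth hyD hε0 hxy (half_pos hδ) hC0 hCb
    rw [dist_eq_norm, sub_zero, norm_smul, Real.norm_eq_abs, abs_of_pos (by positivity : (0:ℝ) < ε^2)]
    have h4 : ε^2 * ‖R (ε:ℂ) v‖ ≤ ε^2 * (δ/2/ε^2 + C/ε) :=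
      mul_le_mul_of_nonneg_left hb (by positivity)
    have h5 : ε^2 * (δ/2/ε^2 + C/ε) = δ/2 + C*ε := by
      field_simp
    have h6 : C * ε < δ/2 := by
      have h7 := (lt_div_iff₀ (by positivity : (0:ℝ) < C+1)).1 hεδ
      nlinarith
    calc ε^2 * ‖R (ε:ℂ) v‖ ≤ δ/2 + C*ε := by rw [← h5]; exact h4
      _ < δ := by linarith
  -- inclusion of the positive reals into the disc
  have hreal : Tendsto (fun ε : ℝ => (ε:ℂ)) (𝓝[>](0:ℝ)) (𝓝[ball (0:ℂ) r] 0) := by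
    apply tendsto_nhdsWithin_of_tendsto_nhds_of_eventually_within
    · exact (Complex.continuous_ofReal.tendsto 0).mono_left nhdsWithin_le_nhds
    · filter_upwards [Ioo_mem_nhdsGT_of_mem (Set.mem_Ico.2 ⟨le_refl (0:ℝ), hr⟩)] with ε hε
      rw [mem_ball_zero_iff, Complex.norm_real, Real.norm_eq_abs, abs_of_pos hε.1]
      exact hε.2
  -- descending construction of holomorphic extensions of μ^(m+1) R μ
  have key : ∃ G : ℂ → X →L[ℂ] X, DifferentiableOn ℂ G (ball (0:ℂ) r) ∧
      ∀ μ : ℂ, μ ≠ 0 → ‖μ‖ < r → G μ = μ^(0+1) • R μ := by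
    set P : ℕ → Prop := fun m => ∃ G : ℂ → X →L[ℂ] X, DifferentiableOn ℂ G (ball (0:ℂ) r) ∧
      ∀ μ : ℂ, μ ≠ 0 → ‖μ‖ < r → G μ = μ^(m+1) • R μ with hP
    have base : P (n-1) := by
      have hnn : n - 1 + 1 = n := Nat.sub_add_cancel hn
      rw [hP]; simp only []
      rw [hnn]
      set f : ℂ → X →L[ℂ] X := fun μ => μ^n • R μ with hf
      have hd : DifferentiableOn ℂ f s :=
        DifferentiableOn.smul ((differentiable_pow n).differentiableOn) hdiff
      have hb : BddAbove (norm ∘ f '' s) := by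
        refine ⟨max M 0, ?_⟩
        rintro w ⟨μ, hμ, rfl⟩
        obtain ⟨h1, h2⟩ := hs_mem hμ
        simp only [Function.comp_apply]
        calc ‖f μ‖ ≤ ‖μ^n‖ * ‖R μ‖ := ContinuousLinearMap.opNorm_smul_le _ _
          _ = ‖μ‖^n * ‖R μ‖ := by rw [norm_pow]
          _ ≤ M := hM μ h1 h2
          _ ≤ max M 0 := le_max_left _ _
      refine ⟨Function.update f 0 (limUnder (𝓝[≠] (0:ℂ)) f),
        Complex.differentiableOn_update_limUnder_of_bddAbove
          (ball_mem_nhds (0:ℂ) hr) hd hb, ?_⟩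
      intro μ h1 h2
      rw [Function.update_of_ne h1]
    have step : ∀ k : ℕ, P (k+1) → P k := by
      intro k hPk
      obtain ⟨G, hGd, hGeq⟩ := hPk
      -- G 0 = 0
      have hG0 : G 0 = 0 := by
        ext v
        have h1 : Tendsto (fun ε : ℝ => G (ε:ℂ)) (𝓝[>](0:ℝ)) (𝓝 (G 0)) :=
          ((hGd.continuousOn 0 (mem_ball_self hr)).tendsto).comp hreal
        have h1v : Tendsto (fun ε : ℝ => G (ε:ℂ) v) (𝓝[>](0:ℝ)) (𝓝 (G 0 v)) :=
          ((ContinuousLinearMap.apply ℂ X v).continuous.tendsto (G 0)).comp h1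
        have h2 : Tendsto (fun ε : ℝ => G (ε:ℂ) v) (𝓝[>](0:ℝ)) (𝓝 0) := by
          have hgt : Tendsto (fun ε : ℝ => ‖ε^2 • R (ε:ℂ) v‖) (𝓝[>](0:ℝ)) (𝓝 0) := by
            simpa using (habel v).norm
          apply squeeze_zero_norm' ?_ hgt
          · filter_upwards [Ioo_mem_nhdsGT_of_mem
              (Set.mem_Ico.2 ⟨le_refl (0:ℝ), lt_min hr one_pos⟩)] with ε hε
            obtain ⟨hε0, hεlt⟩ := hε
            have hεr : ε < r := lt_of_lt_of_le hεlt (min_le_left _ _)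
            have hε1 : ε ≤ 1 := (lt_of_lt_of_le hεlt (min_le_right _ _)).le
            have hc1 : (ε:ℂ) ≠ 0 := Complex.ofReal_ne_zero.2 hε0.ne'
            have hc2 : ‖(ε:ℂ)‖ < r := by
              rw [Complex.norm_real, Real.norm_eq_abs, abs_of_pos hε0]; exact hεr
            rw [hGeq _ hc1 hc2]
            simp only [ContinuousLinearMap.smul_apply]
            rw [norm_smul, norm_smul, norm_pow, Complex.norm_real, Real.norm_eq_abs,
              abs_of_pos hε0, Real.norm_eq_abs, abs_of_pos (by positivity : (0:ℝ) < ε^2)]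
            have : ε^(k+1+1) ≤ ε^2 := by
              calc ε^(k+1+1) = ε^k * ε^2 := by ring
                _ ≤ 1 * ε^2 := by
                    apply mul_le_mul_of_nonneg_right _ (by positivity)
                    exact pow_le_one₀ hε0.le hε1
                _ = ε^2 := one_mul _
            exact mul_le_mul_of_nonneg_right this (norm_nonneg _)
        exact tendsto_nhds_unique h1v h2
      refine ⟨dslope G 0,
        (Complex.differentiableOn_dslope (ball_mem_nhds (0:ℂ) hr)).2 hGd, ?_⟩
      intro μ h1 h2
      rw [dslope_of_ne G h1, slope_def_module, hG0, sub_zero, sub_zero,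
        hGeq μ h1 h2, smul_smul]
      congr 1
      rw [pow_succ, mul_comm (μ^(k+1)) μ, ← mul_assoc, inv_mul_cancel₀ h1, one_mul]
    have down : ∀ j : ℕ, P j → P 0 := by
      intro j
      induction j with
      | zero => exact id
      | succ k ih => intro h; exact ih (step k h)
    exact down (n-1) base
  obtain ⟨G₁, hG₁d, hG₁eq'⟩ := key
  have hG₁eq : ∀ μ : ℂ, μ ≠ 0 → ‖μ‖ < r → G₁ μ = μ • R μ := by
    intro μ h1 h2; rw [hG₁eq' μ h1 h2, zero_add, pow_one]
  set P₀ : X →L[ℂ] X := G₁ 0 with hP₀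
  have hPlim : Tendsto (fun ε : ℝ => G₁ (ε:ℂ)) (𝓝[>](0:ℝ)) (𝓝 P₀) :=
    ((hG₁d.continuousOn 0 (mem_ball_self hr)).tendsto).comp hreal
  set Q : ℂ → X →L[ℂ] X := dslope G₁ 0 with hQ
  have hQd : DifferentiableOn ℂ Q (ball (0:ℂ) r) :=
    (Complex.differentiableOn_dslope (ball_mem_nhds (0:ℂ) hr)).2 hG₁d
  have hQeq : ∀ μ : ℂ, μ ≠ 0 → ‖μ‖ < r → Q μ = μ⁻¹ • (G₁ μ - P₀) := by
    intro μ h1 h2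
    rw [hQ, dslope_of_ne G₁ h1, slope_def_module, sub_zero]
  have hQlim : Tendsto (fun ε : ℝ => Q (ε:ℂ)) (𝓝[>](0:ℝ)) (𝓝 (Q 0)) :=
    ((hQd.continuousOn 0 (mem_ball_self hr)).tendsto).comp hreal
  -- now fix x
  intro x
  refine ⟨P₀ x, ?_⟩
  have happ : Tendsto (fun ε : ℝ => G₁ (ε:ℂ) x) (𝓝[>](0:ℝ)) (𝓝 (P₀ x)) :=
    ((ContinuousLinearMap.apply ℂ X x).continuous.tendsto P₀).comp hPlim
  have happQ : Tendsto (fun ε : ℝ => Q (ε:ℂ) x) (𝓝[>](0:ℝ)) (𝓝 (Q 0 x)) :=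
    ((ContinuousLinearMap.apply ℂ X x).continuous.tendsto (Q 0)).comp hQlim
  have hIoo := Ioo_mem_nhdsGT_of_mem (Set.mem_Ico.2 ⟨le_refl (0:ℝ), hr⟩)
  have hcc : ∀ {ε : ℝ}, ε ∈ Set.Ioo (0:ℝ) r → ((ε:ℂ) ≠ 0 ∧ ‖(ε:ℂ)‖ < r) := by
    intro ε hε
    exact ⟨Complex.ofReal_ne_zero.2 hε.1.ne', by
      rw [Complex.norm_real, Real.norm_eq_abs, abs_of_pos hε.1]; exact hε.2⟩
  have hid0 : Tendsto (fun ε : ℝ => ε) (𝓝[>](0:ℝ)) (𝓝 (0:ℝ)) :=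
    (continuous_id.tendsto 0).mono_left nhdsWithin_le_nhds
  -- P₀ x is in the kernel of A
  have hPx : P₀ x ∈ D ∧ A (P₀ x) = 0 := by
    apply closed_graph hT hA (f := fun ε : ℝ => G₁ (ε:ℂ) x)
    · filter_upwards [hIoo] with ε hε
      obtain ⟨h1, h2⟩ := hcc hε
      rw [hG₁eq _ h1 h2]
      exact (gen_smul hA ((hres _ h1 h2).1 x).1 (ε:ℂ)).1
    · exact happ
    · have h0 : Tendsto (fun ε : ℝ => ε • (G₁ (ε:ℂ) x) - ε • x) (𝓝[>](0:ℝ)) (𝓝 0) := by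
        have h01 := (hid0.smul happ).sub (hid0.smul (tendsto_const_nhds (x := x)))
        simpa using h01
      apply h0.congr'
      filter_upwards [hIoo] with ε hε
      obtain ⟨h1, h2⟩ := hcc hε
      have hRxD : R (ε:ℂ) x ∈ D := ((hres _ h1 h2).1 x).1
      rw [hG₁eq _ h1 h2]
      simp only [ContinuousLinearMap.smul_apply]
      rw [(gen_smul hA hRxD (ε:ℂ)).2, hAR h1 h2 x]
      simp only [smul_sub, creal_smul]
  -- Q 0 x maps to P₀ x - x under A
  have hQx : Q 0 x ∈ D ∧ A (Q 0 x) = P₀ x - x := by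
    apply closed_graph hT hA (f := fun ε : ℝ => Q (ε:ℂ) x)
    · filter_upwards [hIoo] with ε hε
      obtain ⟨h1, h2⟩ := hcc hε
      have hRxD : R (ε:ℂ) x ∈ D := ((hres _ h1 h2).1 x).1
      have hGD : G₁ (ε:ℂ) x ∈ D := by
        rw [hG₁eq _ h1 h2]
        exact (gen_smul hA hRxD (ε:ℂ)).1
      rw [hQeq _ h1 h2]
      simp only [ContinuousLinearMap.smul_apply, ContinuousLinearMap.sub_apply]
      exact (gen_smul hA (gen_sub hA hGD hPx.1).1 _).1
    · exact happQ
    · have h0 : Tendsto (fun ε : ℝ => G₁ (ε:ℂ) x - x) (𝓝[>](0:ℝ)) (𝓝 (P₀ x - x)) :=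
        happ.sub tendsto_const_nhds
      apply h0.congr'
      filter_upwards [hIoo] with ε hε
      obtain ⟨h1, h2⟩ := hcc hε
      have hRxD : R (ε:ℂ) x ∈ D := ((hres _ h1 h2).1 x).1
      have hGD : G₁ (ε:ℂ) x ∈ D := by
        rw [hG₁eq _ h1 h2]
        exact (gen_smul hA hRxD (ε:ℂ)).1
      have hAG : A (G₁ (ε:ℂ) x) = (ε:ℂ) • (G₁ (ε:ℂ) x - x) := by
        conv_lhs => rw [hG₁eq _ h1 h2]
        simp only [ContinuousLinearMap.smul_apply]
        rw [(gen_smul hA hRxD (ε:ℂ)).2, hAR h1 h2 x, smul_sub, smul_sub]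
        rw [hG₁eq _ h1 h2]
        simp only [ContinuousLinearMap.smul_apply]
      rw [hQeq _ h1 h2]
      simp only [ContinuousLinearMap.smul_apply, ContinuousLinearMap.sub_apply]
      rw [(gen_smul hA (gen_sub hA hGD hPx.1).1 _).2, (gen_sub hA hGD hPx.1).2,
        hPx.2, sub_zero, hAG, inv_smul_smul₀ h1]
  -- final computation of the Cesàro averages
  set y : X := Q 0 x with hy
  have hx2 : x = P₀ x - A y := by rw [hQx.2]; abel
  have hfin : ∀ t : ℝ, 1 ≤ t → cesaro T t x = P₀ x - t⁻¹ • (T t y - y) := by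
    intro t ht
    have ht0 : (0:ℝ) < t := lt_of_lt_of_le one_pos ht
    have hint1 : IntervalIntegrable (fun u : ℝ => T u (P₀ x)) MeasureTheory.volume 0 t :=
      intInt hT _ ht0.le
    have hint2 : IntervalIntegrable (fun u : ℝ => T u (A y)) MeasureTheory.volume 0 t :=
      intInt hT _ ht0.le
    have hie : ∫ u in (0:ℝ)..t, T u x
        = (∫ u in (0:ℝ)..t, T u (P₀ x)) - ∫ u in (0:ℝ)..t, T u (A y) := by
      rw [← intervalIntegral.integral_sub hint1 hint2]
      congr 1; funext u
      conv_lhs => rw [hx2]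
      rw [map_sub]
    have hieP : ∫ u in (0:ℝ)..t, T u (P₀ x) = t • P₀ x := by
      rw [intervalIntegral.integral_congr (g := fun _ => P₀ x), intervalIntegral.integral_const,
        sub_zero]
      intro u hu
      rw [Set.uIcc_of_le ht0.le] at hu
      exact const_of_ker hT hA hPx.1 hPx.2 hu.1
    rw [cesaro, hie, hieP, integral_TA hT hA hQx.1 ht0.le, smul_sub, smul_smul,
      inv_mul_cancel₀ ht0.ne', one_smul]
  have hzero : Tendsto (fun t : ℝ => t⁻¹ • (T t y - y)) atTop (𝓝 0) := by
    have hgt : Tendsto (fun t : ℝ => ‖T t y‖/t + ‖y‖/t) atTop (𝓝 0) := by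
      have h1 := hgrowth y
      have h2 : Tendsto (fun t : ℝ => ‖y‖/t) atTop (𝓝 0) := by
        have := (tendsto_inv_atTop_zero (𝕜 := ℝ)).const_mul ‖y‖
        simpa [div_eq_mul_inv] using this
      simpa using h1.add h2
    apply squeeze_zero_norm' ?_ hgt
    · filter_upwards [eventually_ge_atTop (1:ℝ)] with t ht
      have ht0 : (0:ℝ) < t := lt_of_lt_of_le one_pos ht
      rw [norm_smul, Real.norm_eq_abs, abs_of_pos (inv_pos.2 ht0)]
      calc t⁻¹ * ‖T t y - y‖ ≤ t⁻¹ * (‖T t y‖ + ‖y‖) :=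
            mul_le_mul_of_nonneg_left (norm_sub_le _ _) (inv_pos.2 ht0).le
        _ = ‖T t y‖/t + ‖y‖/t := by ring
  have hfinal : Tendsto (fun t : ℝ => P₀ x - t⁻¹ • (T t y - y)) atTop (𝓝 (P₀ x)) := by
    have := (tendsto_const_nhds (x := P₀ x) (f := atTop)).sub hzero
    simpa using this
  apply hfinal.congr'
  filter_upwards [eventually_ge_atTop (1:ℝ)] with t ht
  rw [hfin t ht]
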